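/- Let {X_n}, {Y_n} be sequences of real random variables both converging in distribution to a random variable U, and let {Z_n} be a sequence of real random variables such that X_n(1 − p_n) ≤ Z_n ≤ Y_n(1 + q_n) almost surely for every n, where {p_n} and {q_n} are sequences of random variables converging to 0 in probability. Then Z_n converges in distribution to U. (Lemma C.4: squeeze theorem for convergence in distribution.) -/

import Mathlib

open MeasureTheory ProbabilityTheory Filter Matrix BoundedContinuousFunction
open scoped BigOperators ENNReal NNReal Topology Classical

noncomputable section

/-- Points of `ℝ^d` with the Euclidean structure. -/
abbrev Pt (d : ℕ) := EuclideanSpace ℝ (Fin d)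

/-- `N = ⌊n^(1/d)⌋`. -/
def Nof (d n : ℕ) : ℕ := Nat.floor ((n : ℝ) ^ ((1 : ℝ) / (d : ℝ)))

/-- Quasi-uniformity of the `n`-point sampling set `D ⊂ ℝ^d`: for every `s ∈ D` there is an
enumeration of `D \ {s}` which is monotone in the distance to `s` (so that its `i`-th element is
the `i`-th nearest neighbour of `s`), whose distances obey the two-sided bound
`Cmin (i/n)^{1/d} ≤ r_{s,i} ≤ Cmax (i/n)^{1/d}`. -/
def QuasiUniform (d n : ℕ) (Cmin Cmax : ℝ) (D : Finset (Pt d)) : Prop :=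
  D.card = n ∧
  ∀ s ∈ D, ∃ g : Fin (n - 1) → Pt d,
    (∀ i, g i ∈ D.erase s) ∧ Function.Injective g ∧
    (∀ t ∈ D.erase s, ∃ i, g i = t) ∧
    (∀ i j : Fin (n - 1), i ≤ j → dist s (g i) ≤ dist s (g j)) ∧
    (∀ i : Fin (n - 1),
      Cmin * (((i : ℕ) + 1 : ℝ) / (n : ℝ)) ^ ((1 : ℝ) / (d : ℝ)) ≤ dist s (g i) ∧
      dist s (g i) ≤ Cmax * (((i : ℕ) + 1 : ℝ) / (n : ℝ)) ^ ((1 : ℝ) / (d : ℝ)))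

/-- Preconditioning neighbourhoods `nb` and coefficients `a` of order `m` for the set `D`:
each `N_m(s) = nb s` lies in `D` within distance `c₀/N` of `s`; the coefficients annihilate all
monomials `(t-s)^r` with `|r|₁ < m`, do not annihilate some monomial with `|r|₁ ≥ m`, and are
normalized in Euclidean norm. -/
def PrecondCoeffs (d m : ℕ) (c₀ : ℝ) (N : ℕ) (D : Finset (Pt d))
    (nb : Pt d → Finset (Pt d)) (a : Pt d → Pt d → ℝ) : Prop :=
  ∀ s ∈ D,
    nb s ⊆ D ∧
    (∀ t ∈ nb s, ‖t - s‖ ≤ c₀ / (N : ℝ)) ∧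
    (∀ r : Fin d → ℕ, (∑ j, r j) < m →
      (∑ t ∈ nb s, a s t * ∏ j, (t j - s j) ^ r j) = 0) ∧
    (∃ r : Fin d → ℕ, m ≤ (∑ j, r j) ∧
      (∑ t ∈ nb s, a s t * ∏ j, (t j - s j) ^ r j) ≠ 0) ∧
    (∑ t ∈ nb s, (a s t) ^ 2) = 1

/-- The Fourier filter `f^N_s(ω)` of the preconditioning coefficients. -/
def fN (d : ℕ) (ν : ℝ) (N : ℕ) (nb : Pt d → Finset (Pt d))
    (a : Pt d → Pt d → ℝ) (s ω : Pt d) : ℂ :=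
  ((‖ω‖ ^ (-(ν + (d : ℝ) / 2)) : ℝ) : ℂ) *
    ∑ t ∈ nb s, ((a s t : ℝ) : ℂ) *
      Complex.exp (Complex.I * ((inner ℝ ((N : ℝ) • ω) (t - s) : ℝ) : ℂ))

/-- `h_N(x) = (1 + (Nx)^{-2})^{-(ν + d/2)}`. -/
def hN (d : ℕ) (ν : ℝ) (N : ℕ) (x : ℝ) : ℝ :=
  (1 + ((N : ℝ) * x) ^ (-(2 : ℝ))) ^ (-(ν + (d : ℝ) / 2))

/-- The matrix `K_{n,m}(ρ)`, the `φ₀`-normalized covariance matrix of the preconditioned data,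
given through its spectral representation. -/
def Kmat {d : ℕ} (ν : ℝ) (N : ℕ) (D : Finset (Pt d))
    (nb : Pt d → Finset (Pt d)) (a : Pt d → Pt d → ℝ) (ρ : ℝ) :
    Matrix D D ℝ :=
  Matrix.of fun s t =>
    ρ ^ (-(2 * ν)) *
      (∫ (ω : Pt d),
        Complex.exp (Complex.I * ((inner ℝ ((t : Pt d) - (s : Pt d)) ω : ℝ) : ℂ)) *
          fN d ν N nb a (s : Pt d) ω * (starRingEnd ℂ) (fN d ν N nb a (t : Pt d) ω) *
          ((hN d ν N (ρ * ‖ω‖) : ℝ) : ℂ)).re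

/-- Block-diagonal restriction of a matrix along the partition determined by a labelling `bin`. -/
def bdiag {d : ℕ} {D : Finset (Pt d)} (bin : Pt d → ℕ) (A : Matrix D D ℝ) :
    Matrix D D ℝ :=
  Matrix.of fun s t => if bin (s : Pt d) = bin (t : Pt d) then A s t else 0

/-- `L_{n,m}(ρ) = ρ^{2ν} K_{n,m}(ρ)`. -/
def Lmat {d : ℕ} (ν : ℝ) (N : ℕ) (D : Finset (Pt d))
    (nb : Pt d → Finset (Pt d)) (a : Pt d → Pt d → ℝ) (ρ : ℝ) :
    Matrix D D ℝ :=
  ρ ^ (2 * ν) • Kmat ν N D nb a ρ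

/-- `K^B_{n,m}(ρ)`: the block-diagonal approximation of `K_{n,m}(ρ)`. -/
def KmatB {d : ℕ} (ν : ℝ) (N : ℕ) (D : Finset (Pt d))
    (nb : Pt d → Finset (Pt d)) (a : Pt d → Pt d → ℝ) (bin : Pt d → ℕ) (ρ : ℝ) :
    Matrix D D ℝ := bdiag bin (Kmat ν N D nb a ρ)

/-- `L^B_{n,m}(ρ) = ρ^{2ν} K^B_{n,m}(ρ)`. -/
def LmatB {d : ℕ} (ν : ℝ) (N : ℕ) (D : Finset (Pt d))
    (nb : Pt d → Finset (Pt d)) (a : Pt d → Pt d → ℝ) (bin : Pt d → ℕ) (ρ : ℝ) :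
    Matrix D D ℝ := bdiag bin (Lmat ν N D nb a ρ)

/-- Euclidean norm of a finite-dimensional real vector. -/
def eNorm {ι : Type*} [Fintype ι] (v : ι → ℝ) : ℝ := Real.sqrt (∑ i, (v i) ^ 2)

/-- Frobenius norm of a real matrix. -/
def frobNorm {ι : Type*} [Fintype ι] (A : Matrix ι ι ℝ) : ℝ :=
  Real.sqrt (∑ i, ∑ j, (A i j) ^ 2)

/-- The `ℓ² → ℓ²` operator (spectral) norm of a real matrix. -/
def opNorm {ι : Type*} [Fintype ι] (A : Matrix ι ι ℝ) : ℝ :=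
  sSup {c : ℝ | ∃ v : ι → ℝ, eNorm v ≤ 1 ∧ c = eNorm (A.mulVec v)}

/-- The nuclear norm (sum of singular values): trace of the psd square root of `Aᵀ A`. -/
def nucNorm {ι : Type*} [Fintype ι] [DecidableEq ι] (A : Matrix ι ι ℝ) : ℝ :=
  (((Matrix.posSemidef_conjTranspose_mul_self A).1.eigenvectorUnitary : Matrix ι ι ℝ) *
    Matrix.diagonal ((RCLike.ofReal : ℝ → ℝ) ∘ (Real.sqrt ·) ∘ (Matrix.posSemidef_conjTranspose_mul_self A).1.eigenvalues) *
    (star ((Matrix.posSemidef_conjTranspose_mul_self A).1.eigenvectorUnitary : Matrix ι ι ℝ))).trace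

/-- The standard Gaussian product measure on `ι → ℝ`. -/
def stdGaussianPi (ι : Type*) [Fintype ι] : Measure (ι → ℝ) :=
  Measure.pi fun _ => gaussianReal 0 1

end

section SqueezeHelpers

open MeasureTheory Filter Set Topology
open scoped ENNReal NNReal Classical


lemma exists_mem_co_countable {C : Set ℝ} (hC : Set.Countable Cᶜ) {a b : ℝ} (hab : a < b) :
    ∃ x ∈ C, a < x ∧ x < b := by
  by_contra h
  push_neg at h
  have hsub : Set.Ioo a b ⊆ Cᶜ := by
    intro x hx hxC
    exact absurd hx.2 (not_lt.2 (h x hxC hx.1))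
  have h0 : volume (Set.Ioo a b) = 0 :=
    measure_mono_null hsub (hC.measure_zero _)
  rw [Real.volume_Ioo] at h0
  simp [ENNReal.ofReal_eq_zero, sub_nonpos] at h0
  linarith

lemma cover_Ioc {t : ℕ → ℝ} :
    ∀ m x, t 0 < x → x ≤ t m → ∃ i < m, t i < x ∧ x ≤ t (i + 1) := by
  intro m
  induction m with
  | zero => intro x h1 h2; exact absurd (h1.trans_le h2) (lt_irrefl _)
  | succ m ih =>
    intro x h1 h2
    by_cases h : x ≤ t m
    · obtain ⟨i, hi, hx⟩ := ih x h1 h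
      exact ⟨i, Nat.lt_succ_of_lt hi, hx⟩
    · exact ⟨m, Nat.lt_succ_self m, not_le.mp h, h2⟩

lemma tendsto_pm_of_cdf
    (μ : ProbabilityMeasure ℝ) (μs : ℕ → ProbabilityMeasure ℝ)
    (C : Set ℝ) (hC : Set.Countable Cᶜ)
    (h : ∀ t ∈ C, Tendsto (fun n => (μs n : Measure ℝ) (Set.Iic t)) atTop
      (𝓝 ((μ : Measure ℝ) (Set.Iic t)))) :
    Tendsto μs atTop (𝓝 μ) := by
  have hIoc : ∀ a b : ℝ, a ∈ C → b ∈ C → a ≤ b →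
      Tendsto (fun n => (μs n : Measure ℝ) (Set.Ioc a b)) atTop
        (𝓝 ((μ : Measure ℝ) (Set.Ioc a b))) := by
    intro a b ha hb hab
    have rep : ∀ κ : Measure ℝ, IsProbabilityMeasure κ →
        κ (Set.Ioc a b) = κ (Set.Iic b) - κ (Set.Iic a) := by
      intro κ hκ
      rw [← Set.Iic_sdiff_Iic, measure_diff (Set.Iic_subset_Iic.2 hab)
        measurableSet_Iic.nullMeasurableSet (measure_ne_top κ _)]
    have h1 : ∀ n, (μs n : Measure ℝ) (Set.Ioc a b) =
        (μs n : Measure ℝ) (Set.Iic b) - (μs n : Measure ℝ) (Set.Iic a) :=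
      fun n => rep _ inferInstance
    rw [rep (μ : Measure ℝ) inferInstance]
    simp only [h1]
    exact ENNReal.Tendsto.sub (h b hb) (h a ha) (Or.inr (measure_ne_top _ _))
  have main : ∀ G : Set ℝ, IsOpen G →
      (μ : Measure ℝ) G ≤ atTop.liminf (fun n => (μs n : Measure ℝ) G) := by
    intro G hG
    by_contra hcon
    push_neg at hcon
    obtain ⟨b, hb1, hb2⟩ := exists_between hcon
    -- find compact K ⊆ G with b < μ K
    obtain ⟨K, hKG, hKc, hKb⟩ := hG.measurableSet.exists_lt_isCompact hb2
    obtain ⟨δ, hδ0, hδ⟩ := hKc.exists_thickening_subset_open hG hKG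
    obtain ⟨M, hKM⟩ := hKc.isBounded.subset_closedBall 0
    rw [Real.closedBall_eq_Icc, zero_sub, zero_add] at hKM
    set h0 : ℝ := min δ 1 / 2 with hh0
    have hh0pos : 0 < h0 := by positivity
    have hh0le : h0 ≤ 1 / 2 := by
      rw [hh0]; gcongr; exact min_le_right _ _
    have h3h0 : 3 * h0 / 2 < δ := by
      have : h0 ≤ δ / 2 := by rw [hh0]; gcongr; exact min_le_left _ _
      nlinarith
    set a : ℝ := -M - 1 with ha
    obtain ⟨m, hm⟩ := exists_nat_ge ((M + 1 - a) / h0)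
    have hmM : M + 1 ≤ a + m * h0 := by
      rw [div_le_iff₀ hh0pos] at hm
      linarith
    -- choose grid points in C
    have hex : ∀ i : ℕ, ∃ x ∈ C, a + i * h0 < x ∧ x < a + i * h0 + h0 / 2 := fun i =>
      exists_mem_co_countable hC (by linarith)
    choose t htC ht1 ht2 using hex
    have htmono : StrictMono t := strictMono_nat_of_lt_succ (by
      intro i
      have h1 := ht2 i
      have h2 := ht1 (i + 1)
      push_cast at h2 ⊢
      nlinarith)
    have hgap : ∀ i : ℕ, t (i + 1) - t i < δ := by
      intro i
      have h1 := ht1 i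
      have h2 := ht2 (i + 1)
      push_cast at h2
      nlinarith
    set I : Finset ℕ := (Finset.range m).filter
      (fun i => (K ∩ Set.Ioc (t i) (t (i + 1))).Nonempty) with hI
    set S : Set ℝ := ⋃ i ∈ I, Set.Ioc (t i) (t (i + 1)) with hS
    have hKS : K ⊆ S := by
      intro x hx
      have hxM := hKM hx
      have hx1 : t 0 < x := by
        have := ht2 0
        simp only [Nat.cast_zero, zero_mul, add_zero] at this
        have := hxM.1
        linarith
      have hx2 : x ≤ t m := by
        have := ht1 m
        have := hxM.2
        linarith
      obtain ⟨i, him, hxi⟩ := cover_Ioc m x hx1 hx2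
      have hiI : i ∈ I := by
        rw [hI, Finset.mem_filter, Finset.mem_range]
        exact ⟨him, ⟨x, hx, hxi⟩⟩
      exact Set.mem_biUnion hiI hxi
    have hSG : S ⊆ G := by
      intro x hx
      obtain ⟨i, hiI, hxi⟩ := Set.mem_iUnion₂.mp hx
      rw [hI, Finset.mem_filter] at hiI
      obtain ⟨y, hyK, hyi⟩ := hiI.2
      apply hδ
      rw [Metric.mem_thickening_iff]
      refine ⟨y, hyK, ?_⟩
      rw [Real.dist_eq, abs_lt]
      constructor
      · have := hxi.1; have := hyi.2; have := hgap i; linarith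
      · have := hxi.2; have := hyi.1; have := hgap i; linarith
    have hdisj : (I : Set ℕ).PairwiseDisjoint
        (fun i => Set.Ioc (t i) (t (i + 1))) := by
      intro i _ j _ hij
      rcases hij.lt_or_gt with hlt | hlt
      · rw [Function.onFun, Set.Ioc_disjoint_Ioc]
        have hts : t (i + 1) ≤ t j := htmono.monotone (by omega)
        exact (inf_le_left.trans hts).trans le_sup_right
      · rw [Function.onFun, Set.Ioc_disjoint_Ioc]
        have hts : t (j + 1) ≤ t i := htmono.monotone (by omega)
        exact (inf_le_right.trans hts).trans le_sup_left
    have hSmeas : ∀ κ : Measure ℝ, κ S = ∑ i ∈ I, κ (Set.Ioc (t i) (t (i + 1))) := by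
      intro κ
      exact measure_biUnion_finset hdisj (fun i _ => measurableSet_Ioc)
    have htend : Tendsto (fun n => (μs n : Measure ℝ) S) atTop (𝓝 ((μ : Measure ℝ) S)) := by
      simp_rw [hSmeas]
      exact tendsto_finset_sum I (fun i _ =>
        hIoc (t i) (t (i + 1)) (htC i) (htC (i + 1)) (htmono (Nat.lt_succ_self i)).le)
    have hμS : b < (μ : Measure ℝ) S := hKb.trans_le (measure_mono hKS)
    have hev : ∀ᶠ n in atTop, b < (μs n : Measure ℝ) G := by
      filter_upwards [htend.eventually_const_lt hμS] with n hn
      exact hn.trans_le (measure_mono hSG)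
    have : b ≤ atTop.liminf (fun n => (μs n : Measure ℝ) G) :=
      le_liminf_of_le (by isBoundedDefault) (hev.mono fun n hn => hn.le)
    exact absurd hb1 (not_lt.2 this)
  -- convert ENNReal condition to NNReal and conclude
  apply tendsto_of_forall_isOpen_le_liminf
  intro G G_open
  have obs := main G G_open
  have aux : (ENNReal.ofNNReal (atTop.liminf fun i => μs i G)) =
      atTop.liminf (ENNReal.ofNNReal ∘ fun i => μs i G) := by
    refine Monotone.map_liminf_of_continuousAt (F := atTop) ENNReal.coe_mono (fun i => μs i G)
      ?_ ?_ ?_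
    · exact ENNReal.continuous_coe.continuousAt
    · exact IsBoundedUnder.isCoboundedUnder_ge ⟨1, by
        simp [eventually_map, ProbabilityMeasure.apply_le_one]⟩
    · exact ⟨0, by simp⟩
  rw [← ENNReal.coe_le_coe, aux]
  convert obs using 1
  · simp [ProbabilityMeasure.ennreal_coeFn_eq_coeFn_toMeasure]
  · congr 1
    ext n
    simp [Function.comp, ProbabilityMeasure.ennreal_coeFn_eq_coeFn_toMeasure]

end SqueezeHelpers

/-- **Lemma C.4 (squeeze theorem for convergence in distribution).**  If `Xₙ → U` and `Yₙ → U`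
in distribution, `Xₙ(1 - pₙ) ≤ Zₙ ≤ Yₙ(1 + qₙ)` almost surely for every `n`, and `pₙ, qₙ → 0`
in probability, then `Zₙ → U` in distribution.  Convergence in distribution is expressed through
bounded continuous test functions. -/
theorem stmt16
    (Ω : ℕ → Type) (mΩ : ∀ n, MeasurableSpace (Ω n))
    (P : ∀ n, Measure (Ω n)) (hP : ∀ n, IsProbabilityMeasure (P n))
    (X Y Z p q : ∀ n, Ω n → ℝ)
    (hmX : ∀ n, Measurable (X n)) (hmY : ∀ n, Measurable (Y n))
    (hmZ : ∀ n, Measurable (Z n)) (hmp : ∀ n, Measurable (p n)) (hmq : ∀ n, Measurable (q n))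
    (Ω' : Type) (mΩ' : MeasurableSpace Ω') (Q : Measure Ω') (hQ : IsProbabilityMeasure Q)
    (U : Ω' → ℝ) (hmU : Measurable U)
    (hX : ∀ f : ℝ →ᵇ ℝ,
      Tendsto (fun n => ∫ ω, f (X n ω) ∂(P n)) atTop (𝓝 (∫ x, f (U x) ∂Q)))
    (hY : ∀ f : ℝ →ᵇ ℝ,
      Tendsto (fun n => ∫ ω, f (Y n ω) ∂(P n)) atTop (𝓝 (∫ x, f (U x) ∂Q)))
    (hsq : ∀ n, ∀ᵐ ω ∂(P n), X n ω * (1 - p n ω) ≤ Z n ω ∧ Z n ω ≤ Y n ω * (1 + q n ω))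
    (hp : ∀ ε : ℝ, 0 < ε → Tendsto (fun n => P n {ω | ε < |p n ω|}) atTop (𝓝 0))
    (hq : ∀ ε : ℝ, 0 < ε → Tendsto (fun n => P n {ω | ε < |q n ω|}) atTop (𝓝 0)) :
    ∀ f : ℝ →ᵇ ℝ,
      Tendsto (fun n => ∫ ω, f (Z n ω) ∂(P n)) atTop (𝓝 (∫ x, f (U x) ∂Q)) := by
  haveI := hQ
  haveI : ∀ n, IsProbabilityMeasure (P n) := hP
  set ν : ProbabilityMeasure ℝ := ⟨Q.map U, Measure.isProbabilityMeasure_map hmU.aemeasurable⟩ with hνdef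
  set νX : ℕ → ProbabilityMeasure ℝ :=
    fun n => ⟨(P n).map (X n), Measure.isProbabilityMeasure_map (hmX n).aemeasurable⟩ with hνXdef
  set νY : ℕ → ProbabilityMeasure ℝ :=
    fun n => ⟨(P n).map (Y n), Measure.isProbabilityMeasure_map (hmY n).aemeasurable⟩ with hνYdef
  set νZ : ℕ → ProbabilityMeasure ℝ :=
    fun n => ⟨(P n).map (Z n), Measure.isProbabilityMeasure_map (hmZ n).aemeasurable⟩ with hνZdef
  have hU' : ∀ f : ℝ →ᵇ ℝ, (∫ x, f x ∂(ν : Measure ℝ)) = ∫ x, f (U x) ∂Q := fun f =>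
    integral_map hmU.aemeasurable f.continuous.measurable.aestronglyMeasurable
  -- weak convergence of the laws of X and Y
  have hXw : Tendsto νX atTop (𝓝 ν) := by
    rw [ProbabilityMeasure.tendsto_iff_forall_integral_tendsto]
    intro f
    have e : ∀ n, (∫ ω, f ω ∂((νX n : Measure ℝ))) = ∫ ω, f (X n ω) ∂(P n) := fun n =>
      integral_map (hmX n).aemeasurable f.continuous.measurable.aestronglyMeasurable
    simp only [e, hU' f]
    exact hX f
  have hYw : Tendsto νY atTop (𝓝 ν) := by
    rw [ProbabilityMeasure.tendsto_iff_forall_integral_tendsto]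
    intro f
    have e : ∀ n, (∫ ω, f ω ∂((νY n : Measure ℝ))) = ∫ ω, f (Y n ω) ∂(P n) := fun n =>
      integral_map (hmY n).aemeasurable f.continuous.measurable.aestronglyMeasurable
    simp only [e, hU' f]
    exact hY f
  -- the set of non-atoms of ν
  set C : Set ℝ := {x : ℝ | (ν : Measure ℝ) {x} = 0} with hCdef
  have hCc : Set.Countable Cᶜ := by
    have h1 : {x : ℝ | 0 < (ν : Measure ℝ) {x}}.Countable := by
      apply MeasureTheory.Measure.countable_meas_pos_of_disjoint_iUnion
        (As := fun t : ℝ => {t})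
      · exact fun i => measurableSet_singleton i
      · exact fun i j hij => by simpa using hij
    refine h1.mono ?_
    intro x hx
    simp only [hCdef, Set.mem_compl_iff, Set.mem_setOf_eq] at hx ⊢
    exact pos_iff_ne_zero.mpr hx
  -- cdf convergence for X and Y at non-atoms
  have hXcdf : ∀ s ∈ C, Tendsto (fun n => P n (X n ⁻¹' Set.Iic s)) atTop
      (𝓝 ((ν : Measure ℝ) (Set.Iic s))) := by
    intro s hs
    have h0 : (ν : Measure ℝ) (frontier (Set.Iic s)) = 0 := by rw [frontier_Iic]; exact hs
    have h1 := ProbabilityMeasure.tendsto_measure_of_null_frontier_of_tendsto' hXw h0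
    have e : ∀ n, (νX n : Measure ℝ) (Set.Iic s) = P n (X n ⁻¹' Set.Iic s) := fun n =>
      Measure.map_apply (hmX n) measurableSet_Iic
    simpa only [e] using h1
  have hYcdf : ∀ s ∈ C, Tendsto (fun n => P n (Y n ⁻¹' Set.Iic s)) atTop
      (𝓝 ((ν : Measure ℝ) (Set.Iic s))) := by
    intro s hs
    have h0 : (ν : Measure ℝ) (frontier (Set.Iic s)) = 0 := by rw [frontier_Iic]; exact hs
    have h1 := ProbabilityMeasure.tendsto_measure_of_null_frontier_of_tendsto' hYw h0
    have e : ∀ n, (νY n : Measure ℝ) (Set.Iic s) = P n (Y n ⁻¹' Set.Iic s) := fun n =>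
      Measure.map_apply (hmY n) measurableSet_Iic
    simpa only [e] using h1
  -- tightness: choose a large M
  have htM : ∀ ε : ℝ≥0∞, 0 < ε → ∃ M : ℝ, 0 < M ∧
      (ν : Measure ℝ) ((Set.Ioo (-M) M)ᶜ) < ε := by
    intro ε hε
    have hanti : Antitone (fun k : ℕ => (Set.Ioo (-(k + 1 : ℝ)) (k + 1))ᶜ) := by
      intro k l hkl
      have hkl' : (k : ℝ) ≤ l := by exact_mod_cast hkl
      apply Set.compl_subset_compl.mpr
      apply Set.Ioo_subset_Ioo
      · push_cast; linarith
      · push_cast; linarith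
    have hempty : (⋂ k : ℕ, (Set.Ioo (-(k + 1 : ℝ)) (k + 1))ᶜ) = ∅ := by
      ext x
      simp only [Set.mem_iInter, Set.mem_compl_iff, Set.mem_Ioo, Set.mem_empty_iff_false,
        iff_false, not_forall, not_not, not_and, not_lt]
      obtain ⟨k, hk⟩ := exists_nat_gt |x|
      refine ⟨k, ?_, ?_⟩
      · have := neg_abs_le x; push_cast; linarith
      · have := le_abs_self x; push_cast; linarith
    have h1 := tendsto_measure_iInter_atTop (μ := (ν : Measure ℝ))
      (s := fun k : ℕ => (Set.Ioo (-(k + 1 : ℝ)) (k + 1))ᶜ)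
      (fun k => (isOpen_Ioo.isClosed_compl).measurableSet.nullMeasurableSet) hanti
      ⟨0, measure_ne_top _ _⟩
    rw [hempty] at h1
    simp only [measure_empty] at h1
    obtain ⟨k, hk⟩ := (h1.eventually_lt_const hε).exists
    exact ⟨(k : ℝ) + 1, by positivity, hk⟩
  -- cdf convergence for Z at non-atoms
  have hZcdf : ∀ t ∈ C, Tendsto (fun n => (νZ n : Measure ℝ) (Set.Iic t)) atTop
      (𝓝 ((ν : Measure ℝ) (Set.Iic t))) := by
    intro t ht
    have eZ : ∀ n, (νZ n : Measure ℝ) (Set.Iic t) = P n (Z n ⁻¹' Set.Iic t) := fun n =>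
      Measure.map_apply (hmZ n) measurableSet_Iic
    simp only [eZ]
    set v : ℝ≥0∞ := (ν : Measure ℝ) (Set.Iic t) with hvdef
    have hv1 : v ≤ 1 := prob_le_one
    refine tendsto_of_le_liminf_of_limsup_le ?_ ?_
    · -- liminf branch
      by_contra hcon
      push_neg at hcon
      obtain ⟨c, hc1, hc2⟩ := exists_between hcon
      obtain ⟨c₂, hcc2, hc2v⟩ := exists_between hc2
      have hc₂top : c₂ ≠ ∞ := (hc2v.trans_le hv1).ne_top
      -- choose s < t, s ∈ C, with c₂ < ν (Iic s)
      have hIoc0 : Tendsto (fun k : ℕ => (ν : Measure ℝ) (Set.Ioc (t - 1 / (k + 1)) t)) atTop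
          (𝓝 0) := by
        have hanti : Antitone (fun k : ℕ => Set.Ioc (t - 1 / ((k : ℝ) + 1)) t) := by
          intro k l hkl
          apply Set.Ioc_subset_Ioc_left
          have h1 : (1 : ℝ) / ((l : ℝ) + 1) ≤ 1 / ((k : ℝ) + 1) := by
            apply one_div_le_one_div_of_le (by positivity)
            have : (k : ℝ) ≤ l := by exact_mod_cast hkl
            linarith
          linarith
        have hsingle : (⋂ k : ℕ, Set.Ioc (t - 1 / ((k : ℝ) + 1)) t) = {t} := by
          ext x
          simp only [Set.mem_iInter, Set.mem_Ioc, Set.mem_singleton_iff]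
          constructor
          · intro hx
            have hxt : x ≤ t := (hx 0).2
            rcases eq_or_lt_of_le hxt with h | h
            · exact h
            · exfalso
              obtain ⟨k, hk⟩ := exists_nat_one_div_lt (sub_pos.mpr h)
              have := (hx k).1
              linarith
          · intro hx k
            have h0 : (0 : ℝ) < 1 / ((k : ℝ) + 1) := by positivity
            exact ⟨by rw [hx]; linarith, hx.le⟩
        have h1 := tendsto_measure_iInter_atTop (μ := (ν : Measure ℝ))
          (s := fun k : ℕ => Set.Ioc (t - 1 / ((k : ℝ) + 1)) t)
          (fun k => measurableSet_Ioc.nullMeasurableSet) hanti ⟨0, measure_ne_top _ _⟩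
        rw [hsingle] at h1
        rw [show (ν : Measure ℝ) {t} = 0 from ht] at h1
        exact h1
      have hpos : (0 : ℝ≥0∞) < v - c₂ := tsub_pos_of_lt hc2v
      obtain ⟨k, hk⟩ := (hIoc0.eventually_lt_const hpos).exists
      obtain ⟨s, hsC, hs1, hs2⟩ := exists_mem_co_countable hCc
        (show t - 1 / ((k : ℝ) + 1) < t by
          have : (0 : ℝ) < 1 / ((k : ℝ) + 1) := by positivity
          linarith)
      have hst : s < t := hs2
      have hIocs : (ν : Measure ℝ) (Set.Ioc s t) < v - c₂ :=
        lt_of_le_of_lt (measure_mono (Set.Ioc_subset_Ioc_left hs1.le)) hk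
      have hge : c₂ < (ν : Measure ℝ) (Set.Iic s) := by
        by_contra hle
        push_neg at hle
        have h1 : v ≤ (ν : Measure ℝ) (Set.Iic s) + (ν : Measure ℝ) (Set.Ioc s t) := by
          rw [hvdef, ← Set.Iic_union_Ioc_eq_Iic hst.le]
          exact measure_union_le _ _
        have h2 : (ν : Measure ℝ) (Set.Iic s) + (ν : Measure ℝ) (Set.Ioc s t)
            < c₂ + (v - c₂) :=
          ENNReal.add_lt_add_of_le_of_lt (measure_ne_top _ _) hle hIocs
        rw [add_tsub_cancel_of_le hc2v.le] at h2
        exact absurd (h1.trans_lt h2) (lt_irrefl _)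
      -- parameters
      set ε₂ : ℝ≥0∞ := (c₂ - c) / 2 with hε₂def
      have hε₂pos : 0 < ε₂ := ENNReal.half_pos (by
        rw [← pos_iff_ne_zero]; exact tsub_pos_of_lt hcc2)
      have hε₂top : ε₂ + ε₂ ≠ ∞ := by
        rw [ENNReal.add_halves]
        exact (tsub_le_self.trans_lt (lt_of_le_of_lt (le_refl c₂) hc₂top.lt_top)).ne
      have hcε₂ : c + (ε₂ + ε₂) = c₂ := by
        rw [hε₂def, ENNReal.add_halves, add_tsub_cancel_of_le hcc2.le]
      obtain ⟨M, hMpos, hMsmall⟩ := htM ε₂ hε₂pos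
      set F : Set ℝ := (Set.Ioo (-M) M)ᶜ with hFdef
      have hFclosed : IsClosed F := isOpen_Ioo.isClosed_compl
      set δ : ℝ := (t - s) / M with hδdef
      have hδpos : 0 < δ := div_pos (by linarith) hMpos
      have hMδ : M * δ = t - s := by
        rw [hδdef]; field_simp
      -- the three eventual bounds
      have ev1 : ∀ᶠ n in atTop, c₂ < P n (Y n ⁻¹' Set.Iic s) :=
        (hYcdf s hsC).eventually_const_lt hge
      have ev2 : ∀ᶠ n in atTop, P n {ω | δ < |q n ω|} < ε₂ :=
        (hq δ hδpos).eventually_lt_const hε₂pos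
      have ev3 : ∀ᶠ n in atTop, P n (Y n ⁻¹' F) < ε₂ := by
        have hls : atTop.limsup (fun n => P n (Y n ⁻¹' F)) < ε₂ := by
          have e : ∀ n, P n (Y n ⁻¹' F) = (νY n : Measure ℝ) F := fun n =>
            (Measure.map_apply (hmY n) hFclosed.measurableSet).symm
          calc atTop.limsup (fun n => P n (Y n ⁻¹' F))
              = atTop.limsup (fun n => (νY n : Measure ℝ) F) := by simp only [e]
            _ ≤ (ν : Measure ℝ) F :=
                ProbabilityMeasure.limsup_measure_closed_le_of_tendsto hYw hFclosed
            _ < ε₂ := hMsmall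
        exact eventually_lt_of_limsup_lt hls
      -- the squeeze inclusion
      have incl : ∀ n, P n (Y n ⁻¹' Set.Iic s) ≤
          P n (Z n ⁻¹' Set.Iic t) + P n {ω | δ < |q n ω|} + P n (Y n ⁻¹' F) := by
        intro n
        have hsub : (Y n ⁻¹' Set.Iic s : Set (Ω n)) ≤ᵐ[P n]
            (((Z n ⁻¹' Set.Iic t ∪ {ω | δ < |q n ω|}) ∪ (Y n ⁻¹' F) : Set (Ω n))) := by
          filter_upwards [hsq n] with ω hω hωs
          by_cases hqω : δ < |q n ω|
          · exact Or.inl (Or.inr hqω)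
          by_cases hFω : Y n ω ∈ F
          · exact Or.inr hFω
          · push_neg at hqω
            left; left
            simp only [hFdef, Set.mem_compl_iff, not_not, Set.mem_Ioo] at hFω
            have hYabs : |Y n ω| ≤ M := (abs_lt.mpr hFω).le
            have hYq : Y n ω * q n ω ≤ M * δ := by
              calc Y n ω * q n ω ≤ |Y n ω * q n ω| := le_abs_self _
                _ = |Y n ω| * |q n ω| := abs_mul _ _
                _ ≤ M * δ := by
                    apply mul_le_mul hYabs hqω (abs_nonneg _) hMpos.le
            have hYs : Y n ω ≤ s := hωs
            have hZY : Z n ω ≤ Y n ω * (1 + q n ω) := hω.2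
            simp only [Set.mem_preimage, Set.mem_Iic]
            nlinarith [hMδ]
        calc P n (Y n ⁻¹' Set.Iic s)
            ≤ P n ((Z n ⁻¹' Set.Iic t ∪ {ω | δ < |q n ω|}) ∪ (Y n ⁻¹' F)) :=
              measure_mono_ae hsub
          _ ≤ P n (Z n ⁻¹' Set.Iic t ∪ {ω | δ < |q n ω|}) + P n (Y n ⁻¹' F) :=
              measure_union_le _ _
          _ ≤ P n (Z n ⁻¹' Set.Iic t) + P n {ω | δ < |q n ω|} + P n (Y n ⁻¹' F) := by
              gcongr
              exact measure_union_le _ _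
      -- combine
      have hev : ∀ᶠ n in atTop, c < P n (Z n ⁻¹' Set.Iic t) := by
        filter_upwards [ev1, ev2, ev3] with n h1 h2 h3
        have h4 : c₂ < P n (Z n ⁻¹' Set.Iic t) + (ε₂ + ε₂) := by
          calc c₂ < P n (Y n ⁻¹' Set.Iic s) := h1
            _ ≤ P n (Z n ⁻¹' Set.Iic t) + P n {ω | δ < |q n ω|} + P n (Y n ⁻¹' F) := incl n
            _ ≤ P n (Z n ⁻¹' Set.Iic t) + ε₂ + ε₂ :=
                add_le_add (add_le_add le_rfl h2.le) h3.le
            _ = P n (Z n ⁻¹' Set.Iic t) + (ε₂ + ε₂) := by ring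
        rw [← hcε₂] at h4
        exact lt_of_add_lt_add_right h4
      have : c ≤ atTop.liminf (fun n => P n (Z n ⁻¹' Set.Iic t)) :=
        le_liminf_of_le (by isBoundedDefault) (hev.mono fun n hn => hn.le)
      exact absurd hc1 (not_lt.2 this)
    · -- limsup branch
      by_contra hcon
      push_neg at hcon
      obtain ⟨c, hc1, hc2⟩ := exists_between hcon
      obtain ⟨c₂, hvc2, hc2c⟩ := exists_between hc1
      have hls1 : atTop.limsup (fun n => P n (Z n ⁻¹' Set.Iic t)) ≤ 1 :=
        limsup_le_of_le (by isBoundedDefault) (Eventually.of_forall fun n => prob_le_one)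
      have hctop : c ≠ ∞ := (hc2.trans_le hls1).ne_top
      have hc₂top : c₂ ≠ ∞ := (hc2c.trans (hc2.trans_le hls1)).ne_top
      -- choose s > t, s ∈ C, with ν (Iic s) < c₂
      have hIicT : Tendsto (fun k : ℕ => (ν : Measure ℝ) (Set.Iic (t + 1 / ((k : ℝ) + 1))))
          atTop (𝓝 v) := by
        have hanti : Antitone (fun k : ℕ => Set.Iic (t + 1 / ((k : ℝ) + 1))) := by
          intro k l hkl
          apply Set.Iic_subset_Iic.mpr
          have h1 : (1 : ℝ) / ((l : ℝ) + 1) ≤ 1 / ((k : ℝ) + 1) := by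
            apply one_div_le_one_div_of_le (by positivity)
            have : (k : ℝ) ≤ l := by exact_mod_cast hkl
            linarith
          linarith
        have hiic : (⋂ k : ℕ, Set.Iic (t + 1 / ((k : ℝ) + 1))) = Set.Iic t := by
          ext x
          simp only [Set.mem_iInter, Set.mem_Iic]
          constructor
          · intro hx
            by_contra hxt
            push_neg at hxt
            obtain ⟨k, hk⟩ := exists_nat_one_div_lt (sub_pos.mpr hxt)
            have := hx k
            linarith
          · intro hx k
            have : (0 : ℝ) < 1 / ((k : ℝ) + 1) := by positivity
            linarith
        have h1 := tendsto_measure_iInter_atTop (μ := (ν : Measure ℝ))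
          (s := fun k : ℕ => Set.Iic (t + 1 / ((k : ℝ) + 1)))
          (fun k => measurableSet_Iic.nullMeasurableSet) hanti ⟨0, measure_ne_top _ _⟩
        rw [hiic] at h1
        exact h1
      obtain ⟨k, hk⟩ := (hIicT.eventually_lt_const hvc2).exists
      obtain ⟨s, hsC, hs1, hs2⟩ := exists_mem_co_countable hCc
        (show t < t + 1 / ((k : ℝ) + 1) by
          have : (0 : ℝ) < 1 / ((k : ℝ) + 1) := by positivity
          linarith)
      have hts : t < s := hs1
      have hIics : (ν : Measure ℝ) (Set.Iic s) < c₂ :=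
        lt_of_le_of_lt (measure_mono (Set.Iic_subset_Iic.mpr hs2.le)) hk
      -- parameters
      set ε₂ : ℝ≥0∞ := (c - c₂) / 2 with hε₂def
      have hε₂pos : 0 < ε₂ := ENNReal.half_pos (by
        rw [← pos_iff_ne_zero]; exact tsub_pos_of_lt hc2c)
      have hε₂top : ε₂ + ε₂ ≠ ∞ := by
        rw [ENNReal.add_halves]
        exact (tsub_le_self.trans_lt hctop.lt_top).ne
      have hcε₂ : c₂ + (ε₂ + ε₂) = c := by
        rw [hε₂def, ENNReal.add_halves, add_tsub_cancel_of_le hc2c.le]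
      obtain ⟨M, hMpos, hMsmall⟩ := htM ε₂ hε₂pos
      set F : Set ℝ := (Set.Ioo (-M) M)ᶜ with hFdef
      have hFclosed : IsClosed F := isOpen_Ioo.isClosed_compl
      set δ : ℝ := (s - t) / M with hδdef
      have hδpos : 0 < δ := div_pos (by linarith) hMpos
      have hMδ : M * δ = s - t := by
        rw [hδdef]; field_simp
      -- the three eventual bounds
      have ev1 : ∀ᶠ n in atTop, P n (X n ⁻¹' Set.Iic s) < c₂ :=
        (hXcdf s hsC).eventually_lt_const hIics
      have ev2 : ∀ᶠ n in atTop, P n {ω | δ < |p n ω|} < ε₂ :=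
        (hp δ hδpos).eventually_lt_const hε₂pos
      have ev3 : ∀ᶠ n in atTop, P n (X n ⁻¹' F) < ε₂ := by
        have hls : atTop.limsup (fun n => P n (X n ⁻¹' F)) < ε₂ := by
          have e : ∀ n, P n (X n ⁻¹' F) = (νX n : Measure ℝ) F := fun n =>
            (Measure.map_apply (hmX n) hFclosed.measurableSet).symm
          calc atTop.limsup (fun n => P n (X n ⁻¹' F))
              = atTop.limsup (fun n => (νX n : Measure ℝ) F) := by simp only [e]
            _ ≤ (ν : Measure ℝ) F :=
                ProbabilityMeasure.limsup_measure_closed_le_of_tendsto hXw hFclosed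
            _ < ε₂ := hMsmall
        exact eventually_lt_of_limsup_lt hls
      -- the squeeze inclusion
      have incl : ∀ n, P n (Z n ⁻¹' Set.Iic t) ≤
          P n (X n ⁻¹' Set.Iic s) + P n {ω | δ < |p n ω|} + P n (X n ⁻¹' F) := by
        intro n
        have hsub : (Z n ⁻¹' Set.Iic t : Set (Ω n)) ≤ᵐ[P n]
            (((X n ⁻¹' Set.Iic s ∪ {ω | δ < |p n ω|}) ∪ (X n ⁻¹' F) : Set (Ω n))) := by
          filter_upwards [hsq n] with ω hω hωt
          by_cases hpω : δ < |p n ω|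
          · exact Or.inl (Or.inr hpω)
          by_cases hFω : X n ω ∈ F
          · exact Or.inr hFω
          · push_neg at hpω
            left; left
            simp only [hFdef, Set.mem_compl_iff, not_not, Set.mem_Ioo] at hFω
            have hXabs : |X n ω| ≤ M := (abs_lt.mpr hFω).le
            have hXp : X n ω * p n ω ≤ M * δ := by
              calc X n ω * p n ω ≤ |X n ω * p n ω| := le_abs_self _
                _ = |X n ω| * |p n ω| := abs_mul _ _
                _ ≤ M * δ := by
                    apply mul_le_mul hXabs hpω (abs_nonneg _) hMpos.le
            have hZt : Z n ω ≤ t := hωt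
            have hXZ : X n ω * (1 - p n ω) ≤ Z n ω := hω.1
            simp only [Set.mem_preimage, Set.mem_Iic]
            nlinarith [hMδ]
        calc P n (Z n ⁻¹' Set.Iic t)
            ≤ P n ((X n ⁻¹' Set.Iic s ∪ {ω | δ < |p n ω|}) ∪ (X n ⁻¹' F)) :=
              measure_mono_ae hsub
          _ ≤ P n (X n ⁻¹' Set.Iic s ∪ {ω | δ < |p n ω|}) + P n (X n ⁻¹' F) :=
              measure_union_le _ _
          _ ≤ P n (X n ⁻¹' Set.Iic s) + P n {ω | δ < |p n ω|} + P n (X n ⁻¹' F) := by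
              gcongr
              exact measure_union_le _ _
      -- combine
      have hev : ∀ᶠ n in atTop, P n (Z n ⁻¹' Set.Iic t) < c := by
        filter_upwards [ev1, ev2, ev3] with n h1 h2 h3
        calc P n (Z n ⁻¹' Set.Iic t)
            ≤ P n (X n ⁻¹' Set.Iic s) + P n {ω | δ < |p n ω|} + P n (X n ⁻¹' F) := incl n
          _ < c₂ + ε₂ + ε₂ := by
              apply ENNReal.add_lt_add_of_le_of_lt (by finiteness) ?_ h3
              exact (ENNReal.add_lt_add_of_le_of_lt (by finiteness) h1.le h2).le
          _ = c₂ + (ε₂ + ε₂) := by ring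
          _ = c := hcε₂
      have : atTop.limsup (fun n => P n (Z n ⁻¹' Set.Iic t)) ≤ c :=
        limsup_le_of_le (by isBoundedDefault) (hev.mono fun n hn => hn.le)
      exact absurd hc2 (not_lt.2 this)
  -- conclude weak convergence of Z via the cdf lemma
  have hZw : Tendsto νZ atTop (𝓝 ν) := tendsto_pm_of_cdf ν νZ C hCc hZcdf
  intro f
  have h1 := ProbabilityMeasure.tendsto_iff_forall_integral_tendsto.mp hZw f
  have e : ∀ n, (∫ ω, f ω ∂((νZ n : Measure ℝ))) = ∫ ω, f (Z n ω) ∂(P n) := fun n =>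
    integral_map (hmZ n).aemeasurable f.continuous.measurable.aestronglyMeasurable
  simpa only [e, hU' f] using h1
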